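/- Let R be an unramified dyadic local ring. If an R-lattice J primitively represents 2^{a+1}ε for a nonnegative integer a and a unit ε ∈ R^×, then ℍ ⊥ J primitively represents both 2^a ℍ and 2^a 𝔸. -/

import Mathlib

open Matrix

/-- Primitive representation: `T` with `Tᵀ H T = G` whose image is a direct summand
(equivalently `T` has a left inverse). -/
def PrimRep {R : Type*} [CommRing R] {ι κ : Type*} [Fintype ι] [Fintype κ] [DecidableEq κ]
    (G : Matrix κ κ R) (H : Matrix ι ι R) : Prop :=
  ∃ T : Matrix ι κ R, Tᵀ * H * T = G ∧ ∃ P : Matrix κ ι R, P * T = 1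

/-- Solve `γ - γ² + t²ε = ρ` with `t` a unit, using the finite residue field of
characteristic 2 and Hensel's lemma. -/
lemma exists_gamma_t (R : Type*) [CommRing R] [IsLocalRing R]
    [IsAdicComplete (IsLocalRing.maximalIdeal R) R]
    [Finite (IsLocalRing.ResidueField R)]
    (h2 : Prime (2 : R)) (ρ : R) (hρ : IsUnit ρ) (ε : Rˣ) :
    ∃ γ t : R, IsUnit t ∧ γ - γ ^ 2 + t ^ 2 * (ε : R) = ρ := by
  set k := IsLocalRing.ResidueField R
  set φ := IsLocalRing.residue R with hφ
  have h2m : (2 : R) ∈ IsLocalRing.maximalIdeal R := by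
    rw [IsLocalRing.mem_maximalIdeal, mem_nonunits_iff]
    exact h2.not_unit
  have h20 : (2 : k) = 0 := by
    have : φ 2 = 0 := Ideal.Quotient.eq_zero_iff_mem.mpr h2m
    rw [map_ofNat] at this
    exact this
  have hchar : ringChar k = 2 := by
    have hdvd : ringChar k ∣ 2 := ringChar.dvd (by push_cast; exact h20)
    rcases (Nat.prime_two).eq_one_or_self_of_dvd _ hdvd with h | h
    · exfalso
      have h1 : ((1 : ℕ) : k) = 0 := (ringChar.spec k 1).mpr (h ▸ dvd_refl _)
      simp at h1
    · exact h
  have hεu : IsUnit (φ (ε : R)) := (Units.isUnit ε).map φ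
  have hρu : IsUnit (φ ρ) := hρ.map φ
  obtain ⟨s, hs⟩ := FiniteField.isSquare_of_char_two hchar (φ ρ * (φ (ε : R))⁻¹)
  obtain ⟨t, htres⟩ := IsLocalRing.residue_surjective (R := R) s
  have hsne : s ≠ 0 := by
    intro h
    rw [h, mul_zero] at hs
    have : φ ρ = 0 := by
      field_simp [hεu.ne_zero] at hs
      simpa using hs
    exact hρu.ne_zero this
  have htu : IsUnit t := by
    by_contra h
    have : t ∈ IsLocalRing.maximalIdeal R := by
      rw [IsLocalRing.mem_maximalIdeal, mem_nonunits_iff]; exact h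
    have : φ t = 0 := Ideal.Quotient.eq_zero_iff_mem.mpr this
    rw [htres] at this
    exact hsne this
  set c : R := t ^ 2 * (ε : R) - ρ with hc
  have hcm : c ∈ IsLocalRing.maximalIdeal R := by
    rw [← Ideal.Quotient.eq_zero_iff_mem]
    have : φ c = φ t ^ 2 * φ (ε : R) - φ ρ := by simp [hc]
    rw [show (Ideal.Quotient.mk (IsLocalRing.maximalIdeal R)) c = φ c from rfl, this, htres]
    have hs' : φ ρ = s * s * φ (ε : R) := by
      have h := congrArg (· * φ (ε : R)) hs
      simpa [mul_assoc, inv_mul_cancel₀ hεu.ne_zero] using h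
    rw [hs', sq]
    exact sub_self _
  have hmonic : (Polynomial.X ^ 2 - (Polynomial.X + Polynomial.C c)).Monic := by
    apply Polynomial.monic_X_pow_sub
    have h1 : (Polynomial.X + Polynomial.C c : Polynomial R).degree ≤ 1 := by
      apply le_trans (Polynomial.degree_add_le _ _)
      simp only [Polynomial.degree_X, max_le_iff]
      exact ⟨le_refl _, le_trans Polynomial.degree_C_le (by norm_num)⟩
    exact lt_of_le_of_lt h1 (by norm_num)
  have heval : (Polynomial.X ^ 2 - (Polynomial.X + Polynomial.C c)).eval 0
      ∈ IsLocalRing.maximalIdeal R := by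
    simpa using (IsLocalRing.maximalIdeal R).neg_mem hcm
  have hderiv : IsUnit ((Ideal.Quotient.mk (IsLocalRing.maximalIdeal R))
      ((Polynomial.X ^ 2 - (Polynomial.X + Polynomial.C c)).derivative.eval 0)) := by
    have : (Polynomial.X ^ 2 - (Polynomial.X + Polynomial.C c)).derivative.eval (0 : R)
        = -1 := by simp
    rw [this]
    simpa using (isUnit_one (M := IsLocalRing.ResidueField R)).neg
  obtain ⟨γ, hroot, -⟩ := HenselianRing.is_henselian (I := IsLocalRing.maximalIdeal R)
    (Polynomial.X ^ 2 - (Polynomial.X + Polynomial.C c)) hmonic 0 heval hderiv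
  refine ⟨γ, t, htu, ?_⟩
  have : γ ^ 2 - (γ + c) = 0 := by simpa [Polynomial.IsRoot] using hroot
  rw [hc] at this
  linear_combination -this

/-- Auxiliary construction of a primitive representation of a binary form
inside `ℍ ⊥ J`, from a primitive vector of `J` of norm `q`. -/
lemma primRep_aux {R : Type*} [CommRing R] {m : ℕ} (J : Matrix (Fin m) (Fin m) R) (q : R)
    (T : Matrix (Fin m) (Fin 1) R) (P : Matrix (Fin 1) (Fin m) R)
    (hT : Tᵀ * J * T = !![q]) (hP : P * T = 1)
    (A QA : Matrix (Fin 2) (Fin 2) R) (c : Matrix (Fin 1) (Fin 2) R)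
    (B : Matrix (Fin 2) (Fin 1) R) (G : Matrix (Fin 2) (Fin 2) R)
    (hG : Aᵀ * !![0, 1; 1, 0] * A + cᵀ * !![q] * c = G)
    (hQ : QA * A + B * c = 1) :
    PrimRep G (Matrix.fromBlocks (!![0, 1; 1, 0] : Matrix (Fin 2) (Fin 2) R) 0 0 J) := by
  refine ⟨fromRows A (T * c), ?_, fromCols QA (B * P), ?_⟩
  · rw [transpose_fromRows, Matrix.mul_assoc, fromBlocks_mul_fromRows]
    simp only [Matrix.zero_mul, add_zero, zero_add]
    rw [fromCols_mul_fromRows, ← hG]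
    congr 1
    · rw [Matrix.mul_assoc]
    · rw [Matrix.transpose_mul]
      calc cᵀ * Tᵀ * (J * (T * c)) = cᵀ * (Tᵀ * J * T) * c := by
            simp only [Matrix.mul_assoc]
        _ = cᵀ * !![q] * c := by rw [hT]
  · rw [fromCols_mul_fromRows]
    calc QA * A + B * P * (T * c) = QA * A + B * (P * T) * c := by
          simp only [Matrix.mul_assoc]
      _ = 1 := by rw [hP, Matrix.mul_one, hQ]

/-- Let `R` be an unramified dyadic local ring (`2` prime).  If a lattice `J` primitively
represents `2^(a+1)ε` for some `a ≥ 0` and unit `ε`, then `ℍ ⊥ J` primitively represents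
both `2^a ℍ` and `2^a 𝔸`, where `𝔸 = [[2,1],[1,2ρ]]` with `Δ = 1 - 4ρ` a nonsquare unit. -/
theorem hyp_perp_represents_scaled_hyperbolic_and_anisotropic
    (R : Type*) [CommRing R] [IsDomain R] [IsDiscreteValuationRing R]
    [IsAdicComplete (IsLocalRing.maximalIdeal R) R]
    [Finite (IsLocalRing.ResidueField R)]
    (h2 : Prime (2 : R))
    (ρ : R) (hρ : IsUnit ρ) (hΔ : ¬ IsSquare ((1 : R) - 4 * ρ))
    {m : ℕ} (J : Matrix (Fin m) (Fin m) R) (hJ : J.IsSymm) (hJd : J.det ≠ 0)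
    (a : ℕ) (ε : Rˣ)
    (hrep : PrimRep (!![2 ^ (a + 1) * (ε : R)] : Matrix (Fin 1) (Fin 1) R) J) :
    PrimRep ((2 ^ a : R) • (!![0, 1; 1, 0] : Matrix (Fin 2) (Fin 2) R))
        (Matrix.fromBlocks (!![0, 1; 1, 0] : Matrix (Fin 2) (Fin 2) R) 0 0 J) ∧
      PrimRep ((2 ^ a : R) • (!![2, 1; 1, 2 * ρ] : Matrix (Fin 2) (Fin 2) R))
        (Matrix.fromBlocks (!![0, 1; 1, 0] : Matrix (Fin 2) (Fin 2) R) 0 0 J) := by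
  obtain ⟨T, hT, P, hP⟩ := hrep
  obtain ⟨γ, t, htu, heq⟩ := exists_gamma_t R h2 ρ hρ ε
  obtain ⟨e', he⟩ : ∃ e' : R, (ε : R) * e' = 1 :=
    ⟨((ε⁻¹ : Rˣ) : R), by exact_mod_cast Units.mul_inv ε⟩
  obtain ⟨t', hti⟩ : ∃ t' : R, t * t' = 1 := by
    obtain ⟨u, hu⟩ := htu
    exact ⟨((u⁻¹ : Rˣ) : R), by rw [← hu]; exact_mod_cast Units.mul_inv u⟩
  constructor
  · refine primRep_aux J (2 ^ (a + 1) * (ε : R)) T P hT hP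
      !![1, -e'; -(2 ^ a * (ε : R)), 0] !![0, 0; -(ε : R), 0] !![1, 0] !![1; (ε : R)] _ ?_ ?_
    · ext i j
      fin_cases i <;> fin_cases j <;>
        simp [Matrix.mul_apply, Fin.sum_univ_succ]
      all_goals
        first
          | ring1
          | linear_combination (2 ^ a : R) * he
          | linear_combination (-(2 ^ a : R)) * he
    · ext i j
      fin_cases i <;> fin_cases j <;>
        simp [Matrix.mul_apply, Fin.sum_univ_succ]
      all_goals
        first
          | ring1
          | linear_combination he
          | linear_combination -he
  · refine primRep_aux J (2 ^ (a + 1) * (ε : R)) T P hT hP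
      !![1, γ; 2 ^ a, 2 ^ a * (1 - γ)] !![1, 0; 0, 0] !![0, t] !![-(γ * t'); t'] _ ?_ ?_
    · ext i j
      fin_cases i <;> fin_cases j <;>
        simp [Matrix.mul_apply, Fin.sum_univ_succ]
      all_goals
        first
          | ring1
          | linear_combination (2 ^ (a + 1) : R) * heq
          | linear_combination (-(2 ^ (a + 1) : R)) * heq
    · ext i j
      fin_cases i <;> fin_cases j <;>
        simp [Matrix.mul_apply, Fin.sum_univ_succ]
      all_goals
        first
          | ring1
          | linear_combination hti
          | linear_combination -hti
          | linear_combination (-γ) * hti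
          | linear_combination γ * hti
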